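/- If a finite simple graph G admits an orientation of its edges in which every vertex has out-degree at most 2, then G admits a string contact representation in ℝ³ of complexity at most 14, i.e., one in which every string is a B₁₄-string. -/

import Mathlib

set_option maxHeartbeats 1000000


open Set

/-- Points of ℝ³, identified with triples of real numbers. -/
abbrev Pt3 : Type := Fin 3 → ℝ

/-- A vector is parallel to a coordinate axis if at most one of its
three coordinates is nonzero. -/
def AxisParallel (v : Pt3) : Prop := ∃ i : Fin 3, ∀ j : Fin 3, j ≠ i → v j = 0

/-- An axis-aligned string in ℝ³: a simple polygonal path `pts 0, pts 1, …, pts k`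
(`k ≥ 1`) with consecutive points distinct, each difference parallel to a coordinate
axis, and the path non-self-intersecting (consecutive segments meet exactly at their
common endpoint and non-consecutive segments are disjoint). -/
structure AAString where
  k : ℕ
  pts : Fin (k + 1) → Pt3
  k_pos : 1 ≤ k
  consec_ne : ∀ i : Fin k, pts i.castSucc ≠ pts i.succ
  axis : ∀ i : Fin k, AxisParallel (pts i.succ - pts i.castSucc)
  simple_consec : ∀ i j : Fin k, (i : ℕ) + 1 = (j : ℕ) →
    segment ℝ (pts i.castSucc) (pts i.succ) ∩ segment ℝ (pts j.castSucc) (pts j.succ)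
      = {pts i.succ}
  simple_far : ∀ i j : Fin k, (i : ℕ) + 1 < (j : ℕ) →
    segment ℝ (pts i.castSucc) (pts i.succ) ∩ segment ℝ (pts j.castSucc) (pts j.succ) = ∅

/-- The string, as a subset of ℝ³: the union of its closed segments. -/
def AAString.carrier (S : AAString) : Set Pt3 :=
  ⋃ i : Fin S.k, segment ℝ (S.pts i.castSucc) (S.pts i.succ)

/-- The two endpoints of the string. -/
def AAString.endpoints (S : AAString) : Set Pt3 := {S.pts 0, S.pts (Fin.last S.k)}

/-- The number of bends of the string: one less than its number of segments. -/
def AAString.bends (S : AAString) : ℕ := S.k - 1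

/-- A string contact representation of a simple graph `G`: two distinct strings meet
only at endpoints of one of them, no point lies on three distinct strings, and two
strings intersect iff the corresponding vertices are adjacent. -/
def IsStringContactRep {V : Type*} (G : SimpleGraph V) (Ψ : V → AAString) : Prop :=
  (∀ u v : V, u ≠ v → ∀ p ∈ (Ψ u).carrier ∩ (Ψ v).carrier,
      p ∈ (Ψ u).endpoints ∪ (Ψ v).endpoints) ∧
  (∀ u v w : V, u ≠ v → u ≠ w → v ≠ w →
      ∀ p : Pt3, ¬ (p ∈ (Ψ u).carrier ∧ p ∈ (Ψ v).carrier ∧ p ∈ (Ψ w).carrier)) ∧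
  (∀ u v : V, u ≠ v → (((Ψ u).carrier ∩ (Ψ v).carrier).Nonempty ↔ G.Adj u v))

lemma seg_coord {a b p : Pt3} (h : p ∈ segment ℝ a b) (j : Fin 3) :
    p j ∈ segment ℝ (a j) (b j) := by
  obtain ⟨s, t, hs, ht, hst, rfl⟩ := h
  exact ⟨s, t, hs, ht, hst, by simp⟩

lemma seg_bounds {a b p : Pt3} (h : p ∈ segment ℝ a b) (j : Fin 3) :
    (a j ≤ p j ∧ p j ≤ b j) ∨ (b j ≤ p j ∧ p j ≤ a j) := by
  have := seg_coord h j
  rw [segment_eq_uIcc, Set.mem_uIcc] at this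
  tauto

lemma seg_const {a b p : Pt3} (h : p ∈ segment ℝ a b) (j : Fin 3) (hj : a j = b j) :
    p j = a j := by
  rcases seg_bounds h j with ⟨h1, h2⟩ | ⟨h1, h2⟩ <;> linarith [hj.le, hj.ge]

lemma seg_corner {a b c : Pt3} (j : Fin 3) (hvar : ∀ j', j' ≠ j → a j' = b j')
    (hconst : b j = c j) (hne : a j ≠ b j) :
    segment ℝ a b ∩ segment ℝ b c = {b} := by
  apply Set.Subset.antisymm
  · rintro p ⟨hp, hq⟩
    have h1 : p j = b j := seg_const hq j hconst
    obtain ⟨s, t, hs, ht, hst, rfl⟩ := hp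
    have h2 : s * a j + t * b j = b j := by simpa using h1
    have hz : s * (a j - b j) = 0 := by linear_combination h2 - (b j) * hst
    have hs0 : s = 0 := by
      rcases mul_eq_zero.mp hz with h | h
      · exact h
      · exact absurd (by linarith : a j = b j) hne
    have ht1 : t = 1 := by linarith
    subst hs0 ht1
    show _ ∈ ({b} : Set Pt3)
    have : (0:ℝ) • a + (1:ℝ) • b = b := by funext j'; simp
    rw [this]; rfl
  · rintro p hp
    rw [Set.mem_singleton_iff] at hp
    rw [hp]
    exact ⟨right_mem_segment ℝ a b, left_mem_segment ℝ b c⟩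

lemma pt_ext {p : Pt3} {x y z : ℝ} (h0 : p 0 = x) (h1 : p 1 = y) (h2 : p 2 = z) :
    p = ![x, y, z] := by
  funext j; fin_cases j <;> simpa

lemma mem_seg_one {a b q : Pt3} (j : Fin 3) (hoth : ∀ j', j' ≠ j → q j' = a j' ∧ a j' = b j')
    (hlt : a j < b j) (h1 : a j ≤ q j) (h2 : q j ≤ b j) : q ∈ segment ℝ a b := by
  set t := (q j - a j) / (b j - a j) with ht
  have hba : b j - a j > 0 := by linarith
  have ht0 : 0 ≤ t := div_nonneg (by linarith) hba.le
  have ht1 : t ≤ 1 := by rw [ht, div_le_one hba]; linarith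
  refine ⟨1 - t, t, by linarith, ht0, by ring, ?_⟩
  funext j'
  by_cases hj' : j' = j
  · subst hj'
    have hval : (b j' - a j') * t = q j' - a j' := by
      rw [ht]; field_simp
    simp only [Pi.add_apply, Pi.smul_apply, smul_eq_mul]
    nlinarith
  · obtain ⟨e1, e2⟩ := hoth j' hj'
    simp only [Pi.add_apply, Pi.smul_apply, smul_eq_mul]
    rw [e1, ← e2]; ring

lemma seg_disj_of {P R : Set Pt3} (h : ∀ p : Pt3, p ∈ P → p ∈ R → False) :
    P ∩ R = ∅ := Set.eq_empty_iff_forall_notMem.mpr (fun p hp => h p hp.1 hp.2)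

def SP (n i x1 x2 : ℝ) : Fin 10 → Pt3 :=
  ![![x1, i-n, 0], ![x1, i-n, i+1], ![i, i-n, i+1], ![i, -(n+1), i+1], ![i, -(n+1), 0],
    ![i, n+1, 0], ![i, n+1, i+1], ![i, n-i, i+1], ![x2, n-i, i+1], ![x2, n-i, 0]]

def mkAA (n i x1 x2 : ℝ) (hi0 : 0 ≤ i) (hi1 : i + 1 ≤ n) (hx1 : x1 ≠ i) (hx2 : x2 ≠ i) :
    AAString where
  k := 9
  pts := SP n i x1 x2
  k_pos := by norm_num
  consec_ne := by
    intro a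
    fin_cases a
    · exact fun h => by have e : (0:ℝ) = i+1 := congrFun h 2; linarith
    · exact fun h => hx1 (congrFun h 0)
    · exact fun h => by have e : (i-n:ℝ) = -(n+1) := congrFun h 1; linarith
    · exact fun h => by have e : (i+1:ℝ) = 0 := congrFun h 2; linarith
    · exact fun h => by have e : (-(n+1):ℝ) = n+1 := congrFun h 1; linarith
    · exact fun h => by have e : (0:ℝ) = i+1 := congrFun h 2; linarith
    · exact fun h => by have e : (n+1:ℝ) = n-i := congrFun h 1; linarith
    · exact fun h => by have e : (i:ℝ) = x2 := congrFun h 0; exact hx2 e.symm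
    · exact fun h => by have e : (i+1:ℝ) = 0 := congrFun h 2; linarith
  axis := by
    intro a
    fin_cases a
    · exact ⟨2, by intro j hj; fin_cases j <;> first | exact sub_self _ | exact absurd rfl hj⟩
    · exact ⟨0, by intro j hj; fin_cases j <;> first | exact sub_self _ | exact absurd rfl hj⟩
    · exact ⟨1, by intro j hj; fin_cases j <;> first | exact sub_self _ | exact absurd rfl hj⟩
    · exact ⟨2, by intro j hj; fin_cases j <;> first | exact sub_self _ | exact absurd rfl hj⟩
    · exact ⟨1, by intro j hj; fin_cases j <;> first | exact sub_self _ | exact absurd rfl hj⟩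
    · exact ⟨2, by intro j hj; fin_cases j <;> first | exact sub_self _ | exact absurd rfl hj⟩
    · exact ⟨1, by intro j hj; fin_cases j <;> first | exact sub_self _ | exact absurd rfl hj⟩
    · exact ⟨0, by intro j hj; fin_cases j <;> first | exact sub_self _ | exact absurd rfl hj⟩
    · exact ⟨2, by intro j hj; fin_cases j <;> first | exact sub_self _ | exact absurd rfl hj⟩
  simple_consec := by
    intro a b hab
    revert hab
    fin_cases a <;> fin_cases b <;> intro hab <;>
      first
      | exact absurd hab (by decide)
      | exact seg_corner 2 (by intro j' h; fin_cases j' <;> first | rfl | exact absurd rfl h)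
          rfl (by intro h; have e : (0:ℝ) = i+1 := h; linarith)
      | exact seg_corner 0 (by intro j' h; fin_cases j' <;> first | rfl | exact absurd rfl h)
          rfl (by intro h; exact hx1 h)
      | exact seg_corner 1 (by intro j' h; fin_cases j' <;> first | rfl | exact absurd rfl h)
          rfl (by intro h; have e : (i-n:ℝ) = -(n+1) := h; linarith)
      | exact seg_corner 2 (by intro j' h; fin_cases j' <;> first | rfl | exact absurd rfl h)
          rfl (by intro h; have e : (i+1:ℝ) = 0 := h; linarith)
      | exact seg_corner 1 (by intro j' h; fin_cases j' <;> first | rfl | exact absurd rfl h)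
          rfl (by intro h; have e : (-(n+1):ℝ) = n+1 := h; linarith)
      | exact seg_corner 1 (by intro j' h; fin_cases j' <;> first | rfl | exact absurd rfl h)
          rfl (by intro h; have e : (n+1:ℝ) = n-i := h; linarith)
      | exact seg_corner 0 (by intro j' h; fin_cases j' <;> first | rfl | exact absurd rfl h)
          rfl (by intro h; exact hx2 h.symm)
  simple_far := by
    intro a b hab
    revert hab
    fin_cases a <;> fin_cases b <;> intro hab
    all_goals try exact absurd hab (by decide)
    -- (0,2)
    · refine seg_disj_of fun p hp hq => ?_
      have e1 : p 0 = x1 := seg_const hp 0 rfl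
      have e2 : p 0 = i := seg_const hq 0 rfl
      exact hx1 (by linarith)
    -- (0,3)
    · refine seg_disj_of fun p hp hq => ?_
      have e1 : p 0 = x1 := seg_const hp 0 rfl
      have e2 : p 0 = i := seg_const hq 0 rfl
      exact hx1 (by linarith)
    -- (0,4)
    · refine seg_disj_of fun p hp hq => ?_
      have e1 : p 0 = x1 := seg_const hp 0 rfl
      have e2 : p 0 = i := seg_const hq 0 rfl
      exact hx1 (by linarith)
    -- (0,5)
    · refine seg_disj_of fun p hp hq => ?_
      have e1 : p 0 = x1 := seg_const hp 0 rfl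
      have e2 : p 0 = i := seg_const hq 0 rfl
      exact hx1 (by linarith)
    -- (0,6)
    · refine seg_disj_of fun p hp hq => ?_
      have e1 : p 1 = i - n := seg_const hp 1 rfl
      have e2 : ((n+1:ℝ) ≤ p 1 ∧ p 1 ≤ n-i) ∨ ((n-i:ℝ) ≤ p 1 ∧ p 1 ≤ n+1) := seg_bounds hq 1
      rcases e2 with ⟨h1, h2⟩ | ⟨h1, h2⟩ <;> linarith
    -- (0,7)
    · refine seg_disj_of fun p hp hq => ?_
      have e1 : p 1 = i - n := seg_const hp 1 rfl
      have e2 : p 1 = n - i := seg_const hq 1 rfl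
      linarith
    -- (0,8)
    · refine seg_disj_of fun p hp hq => ?_
      have e1 : p 1 = i - n := seg_const hp 1 rfl
      have e2 : p 1 = n - i := seg_const hq 1 rfl
      linarith
    -- (1,3)
    · refine seg_disj_of fun p hp hq => ?_
      have e1 : p 1 = i - n := seg_const hp 1 rfl
      have e2 : p 1 = -(n+1) := seg_const hq 1 rfl
      linarith
    -- (1,4)
    · refine seg_disj_of fun p hp hq => ?_
      have e1 : p 2 = i + 1 := seg_const hp 2 rfl
      have e2 : p 2 = 0 := seg_const hq 2 rfl
      linarith
    -- (1,5)
    · refine seg_disj_of fun p hp hq => ?_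
      have e1 : p 1 = i - n := seg_const hp 1 rfl
      have e2 : p 1 = n + 1 := seg_const hq 1 rfl
      linarith
    -- (1,6)
    · refine seg_disj_of fun p hp hq => ?_
      have e1 : p 1 = i - n := seg_const hp 1 rfl
      have e2 : ((n+1:ℝ) ≤ p 1 ∧ p 1 ≤ n-i) ∨ ((n-i:ℝ) ≤ p 1 ∧ p 1 ≤ n+1) := seg_bounds hq 1
      rcases e2 with ⟨h1, h2⟩ | ⟨h1, h2⟩ <;> linarith
    -- (1,7)
    · refine seg_disj_of fun p hp hq => ?_
      have e1 : p 1 = i - n := seg_const hp 1 rfl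
      have e2 : p 1 = n - i := seg_const hq 1 rfl
      linarith
    -- (1,8)
    · refine seg_disj_of fun p hp hq => ?_
      have e1 : p 1 = i - n := seg_const hp 1 rfl
      have e2 : p 1 = n - i := seg_const hq 1 rfl
      linarith
    -- (2,4)
    · refine seg_disj_of fun p hp hq => ?_
      have e1 : p 2 = i + 1 := seg_const hp 2 rfl
      have e2 : p 2 = 0 := seg_const hq 2 rfl
      linarith
    -- (2,5)
    · refine seg_disj_of fun p hp hq => ?_
      have e1 : ((i-n:ℝ) ≤ p 1 ∧ p 1 ≤ -(n+1)) ∨ ((-(n+1):ℝ) ≤ p 1 ∧ p 1 ≤ i-n) := seg_bounds hp 1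
      have e2 : p 1 = n + 1 := seg_const hq 1 rfl
      rcases e1 with ⟨h1, h2⟩ | ⟨h1, h2⟩ <;> linarith
    -- (2,6)
    · refine seg_disj_of fun p hp hq => ?_
      have e1 : ((i-n:ℝ) ≤ p 1 ∧ p 1 ≤ -(n+1)) ∨ ((-(n+1):ℝ) ≤ p 1 ∧ p 1 ≤ i-n) := seg_bounds hp 1
      have e2 : ((n+1:ℝ) ≤ p 1 ∧ p 1 ≤ n-i) ∨ ((n-i:ℝ) ≤ p 1 ∧ p 1 ≤ n+1) := seg_bounds hq 1
      rcases e1 with ⟨h1, h2⟩ | ⟨h1, h2⟩ <;> rcases e2 with ⟨h3, h4⟩ | ⟨h3, h4⟩ <;> linarith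
    -- (2,7)
    · refine seg_disj_of fun p hp hq => ?_
      have e1 : ((i-n:ℝ) ≤ p 1 ∧ p 1 ≤ -(n+1)) ∨ ((-(n+1):ℝ) ≤ p 1 ∧ p 1 ≤ i-n) := seg_bounds hp 1
      have e2 : p 1 = n - i := seg_const hq 1 rfl
      rcases e1 with ⟨h1, h2⟩ | ⟨h1, h2⟩ <;> linarith
    -- (2,8)
    · refine seg_disj_of fun p hp hq => ?_
      have e1 : ((i-n:ℝ) ≤ p 1 ∧ p 1 ≤ -(n+1)) ∨ ((-(n+1):ℝ) ≤ p 1 ∧ p 1 ≤ i-n) := seg_bounds hp 1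
      have e2 : p 1 = n - i := seg_const hq 1 rfl
      rcases e1 with ⟨h1, h2⟩ | ⟨h1, h2⟩ <;> linarith
    -- (3,5)
    · refine seg_disj_of fun p hp hq => ?_
      have e1 : p 1 = -(n+1) := seg_const hp 1 rfl
      have e2 : p 1 = n + 1 := seg_const hq 1 rfl
      linarith
    -- (3,6)
    · refine seg_disj_of fun p hp hq => ?_
      have e1 : p 1 = -(n+1) := seg_const hp 1 rfl
      have e2 : ((n+1:ℝ) ≤ p 1 ∧ p 1 ≤ n-i) ∨ ((n-i:ℝ) ≤ p 1 ∧ p 1 ≤ n+1) := seg_bounds hq 1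
      rcases e2 with ⟨h1, h2⟩ | ⟨h1, h2⟩ <;> linarith
    -- (3,7)
    · refine seg_disj_of fun p hp hq => ?_
      have e1 : p 1 = -(n+1) := seg_const hp 1 rfl
      have e2 : p 1 = n - i := seg_const hq 1 rfl
      linarith
    -- (3,8)
    · refine seg_disj_of fun p hp hq => ?_
      have e1 : p 1 = -(n+1) := seg_const hp 1 rfl
      have e2 : p 1 = n - i := seg_const hq 1 rfl
      linarith
    -- (4,6)
    · refine seg_disj_of fun p hp hq => ?_
      have e1 : p 2 = 0 := seg_const hp 2 rfl
      have e2 : p 2 = i + 1 := seg_const hq 2 rfl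
      linarith
    -- (4,7)
    · refine seg_disj_of fun p hp hq => ?_
      have e1 : p 2 = 0 := seg_const hp 2 rfl
      have e2 : p 2 = i + 1 := seg_const hq 2 rfl
      linarith
    -- (4,8)
    · refine seg_disj_of fun p hp hq => ?_
      have e1 : p 0 = i := seg_const hp 0 rfl
      have e2 : p 0 = x2 := seg_const hq 0 rfl
      exact hx2 (by linarith)
    -- (5,7)
    · refine seg_disj_of fun p hp hq => ?_
      have e1 : p 1 = n + 1 := seg_const hp 1 rfl
      have e2 : p 1 = n - i := seg_const hq 1 rfl
      linarith
    -- (5,8)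
    · refine seg_disj_of fun p hp hq => ?_
      have e1 : p 1 = n + 1 := seg_const hp 1 rfl
      have e2 : p 1 = n - i := seg_const hq 1 rfl
      linarith
    -- (6,8)
    · refine seg_disj_of fun p hp hq => ?_
      have e1 : p 0 = i := seg_const hp 0 rfl
      have e2 : p 0 = x2 := seg_const hq 0 rfl
      exact hx2 (by linarith)

lemma crossAux (n i m x1 x2 y1 y2 : ℝ) (hi0 : 0 ≤ i) (hi1 : i + 1 ≤ n)
    (hm0 : 0 ≤ m) (hm1 : m + 1 ≤ n) (him : i ≠ m) (a b : Fin 9) (hab : (a : ℕ) ≤ (b : ℕ))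
    {p : Pt3}
    (hp : p ∈ segment ℝ (SP n i x1 x2 a.castSucc) (SP n i x1 x2 a.succ))
    (hq : p ∈ segment ℝ (SP n m y1 y2 b.castSucc) (SP n m y1 y2 b.succ)) :
    (x1 = m ∧ p = ![m, i-n, 0]) ∨ (x2 = m ∧ p = ![m, n-i, 0]) ∨
    (y1 = i ∧ p = ![i, m-n, 0]) ∨ (y2 = i ∧ p = ![i, n-m, 0]) := by
  revert hab
  fin_cases a <;> fin_cases b <;> intro hab
  all_goals try exact absurd hab (by decide)
  -- case (0,0)
  · exfalso
    have e1 : p 1 = i-n := seg_const hp 1 rfl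
    have e2 : p 1 = m-n := seg_const hq 1 rfl
    exact him (by linarith)
  -- case (0,1)
  · exfalso
    have e1 : p 1 = i-n := seg_const hp 1 rfl
    have e2 : p 1 = m-n := seg_const hq 1 rfl
    exact him (by linarith)
  -- case (0,2)
  · exfalso
    have e1 : p 1 = i-n := seg_const hp 1 rfl
    have e2 : p 2 = m+1 := seg_const hq 2 rfl
    have e3 : ((0:ℝ) ≤ p 2 ∧ p 2 ≤ i+1) ∨ ((i+1:ℝ) ≤ p 2 ∧ p 2 ≤ 0) := seg_bounds hp 2
    have e4 : ((m-n:ℝ) ≤ p 1 ∧ p 1 ≤ -(n+1)) ∨ ((-(n+1):ℝ) ≤ p 1 ∧ p 1 ≤ m-n) := seg_bounds hq 1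
    rcases e3 with ⟨e3l,e3r⟩|⟨e3l,e3r⟩ <;> rcases e4 with ⟨e4l,e4r⟩|⟨e4l,e4r⟩ <;> exact him (by linarith)
  -- case (0,3)
  · exfalso
    have e1 : p 1 = i-n := seg_const hp 1 rfl
    have e2 : p 1 = -(n+1) := seg_const hq 1 rfl
    linarith
  -- case (0,4)
  · have e1 : p 0 = x1 := seg_const hp 0 rfl
    have e2 : p 0 = m := seg_const hq 0 rfl
    have e3 : p 1 = i-n := seg_const hp 1 rfl
    have e4 : p 2 = 0 := seg_const hq 2 rfl
    exact Or.inl ⟨by linarith, pt_ext e2 e3 e4⟩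
  -- case (0,5)
  · exfalso
    have e1 : p 1 = i-n := seg_const hp 1 rfl
    have e2 : p 1 = n+1 := seg_const hq 1 rfl
    linarith
  -- case (0,6)
  · exfalso
    have e1 : p 1 = i-n := seg_const hp 1 rfl
    have e2 : ((n+1:ℝ) ≤ p 1 ∧ p 1 ≤ n-m) ∨ ((n-m:ℝ) ≤ p 1 ∧ p 1 ≤ n+1) := seg_bounds hq 1
    rcases e2 with ⟨e2l,e2r⟩|⟨e2l,e2r⟩ <;> linarith
  -- case (0,7)
  · exfalso
    have e1 : p 1 = i-n := seg_const hp 1 rfl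
    have e2 : p 1 = n-m := seg_const hq 1 rfl
    linarith
  -- case (0,8)
  · exfalso
    have e1 : p 1 = i-n := seg_const hp 1 rfl
    have e2 : p 1 = n-m := seg_const hq 1 rfl
    linarith
  -- case (1,1)
  · exfalso
    have e1 : p 2 = i+1 := seg_const hp 2 rfl
    have e2 : p 2 = m+1 := seg_const hq 2 rfl
    exact him (by linarith)
  -- case (1,2)
  · exfalso
    have e1 : p 2 = i+1 := seg_const hp 2 rfl
    have e2 : p 2 = m+1 := seg_const hq 2 rfl
    exact him (by linarith)
  -- case (1,3)
  · exfalso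
    have e1 : p 1 = i-n := seg_const hp 1 rfl
    have e2 : p 1 = -(n+1) := seg_const hq 1 rfl
    linarith
  -- case (1,4)
  · exfalso
    have e1 : p 2 = i+1 := seg_const hp 2 rfl
    have e2 : p 2 = 0 := seg_const hq 2 rfl
    linarith
  -- case (1,5)
  · exfalso
    have e1 : p 1 = i-n := seg_const hp 1 rfl
    have e2 : p 1 = n+1 := seg_const hq 1 rfl
    linarith
  -- case (1,6)
  · exfalso
    have e1 : p 2 = i+1 := seg_const hp 2 rfl
    have e2 : p 2 = m+1 := seg_const hq 2 rfl
    exact him (by linarith)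
  -- case (1,7)
  · exfalso
    have e1 : p 2 = i+1 := seg_const hp 2 rfl
    have e2 : p 2 = m+1 := seg_const hq 2 rfl
    exact him (by linarith)
  -- case (1,8)
  · exfalso
    have e1 : p 1 = i-n := seg_const hp 1 rfl
    have e2 : p 1 = n-m := seg_const hq 1 rfl
    linarith
  -- case (2,2)
  · exfalso
    have e1 : p 0 = i := seg_const hp 0 rfl
    have e2 : p 0 = m := seg_const hq 0 rfl
    exact him (by linarith)
  -- case (2,3)
  · exfalso
    have e1 : p 0 = i := seg_const hp 0 rfl
    have e2 : p 0 = m := seg_const hq 0 rfl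
    exact him (by linarith)
  -- case (2,4)
  · exfalso
    have e1 : p 0 = i := seg_const hp 0 rfl
    have e2 : p 0 = m := seg_const hq 0 rfl
    exact him (by linarith)
  -- case (2,5)
  · exfalso
    have e1 : p 0 = i := seg_const hp 0 rfl
    have e2 : p 0 = m := seg_const hq 0 rfl
    exact him (by linarith)
  -- case (2,6)
  · exfalso
    have e1 : p 2 = i+1 := seg_const hp 2 rfl
    have e2 : p 2 = m+1 := seg_const hq 2 rfl
    exact him (by linarith)
  -- case (2,7)
  · exfalso
    have e1 : p 2 = i+1 := seg_const hp 2 rfl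
    have e2 : p 2 = m+1 := seg_const hq 2 rfl
    exact him (by linarith)
  -- case (2,8)
  · exfalso
    have e1 : ((i-n:ℝ) ≤ p 1 ∧ p 1 ≤ -(n+1)) ∨ ((-(n+1):ℝ) ≤ p 1 ∧ p 1 ≤ i-n) := seg_bounds hp 1
    have e2 : p 1 = n-m := seg_const hq 1 rfl
    rcases e1 with ⟨e1l,e1r⟩|⟨e1l,e1r⟩ <;> linarith
  -- case (3,3)
  · exfalso
    have e1 : p 0 = i := seg_const hp 0 rfl
    have e2 : p 0 = m := seg_const hq 0 rfl
    exact him (by linarith)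
  -- case (3,4)
  · exfalso
    have e1 : p 0 = i := seg_const hp 0 rfl
    have e2 : p 0 = m := seg_const hq 0 rfl
    exact him (by linarith)
  -- case (3,5)
  · exfalso
    have e1 : p 0 = i := seg_const hp 0 rfl
    have e2 : p 0 = m := seg_const hq 0 rfl
    exact him (by linarith)
  -- case (3,6)
  · exfalso
    have e1 : p 1 = -(n+1) := seg_const hp 1 rfl
    have e2 : ((n+1:ℝ) ≤ p 1 ∧ p 1 ≤ n-m) ∨ ((n-m:ℝ) ≤ p 1 ∧ p 1 ≤ n+1) := seg_bounds hq 1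
    rcases e2 with ⟨e2l,e2r⟩|⟨e2l,e2r⟩ <;> linarith
  -- case (3,7)
  · exfalso
    have e1 : p 1 = -(n+1) := seg_const hp 1 rfl
    have e2 : p 1 = n-m := seg_const hq 1 rfl
    linarith
  -- case (3,8)
  · exfalso
    have e1 : p 1 = -(n+1) := seg_const hp 1 rfl
    have e2 : p 1 = n-m := seg_const hq 1 rfl
    linarith
  -- case (4,4)
  · exfalso
    have e1 : p 0 = i := seg_const hp 0 rfl
    have e2 : p 0 = m := seg_const hq 0 rfl
    exact him (by linarith)
  -- case (4,5)
  · exfalso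
    have e1 : p 0 = i := seg_const hp 0 rfl
    have e2 : p 0 = m := seg_const hq 0 rfl
    exact him (by linarith)
  -- case (4,6)
  · exfalso
    have e1 : p 2 = 0 := seg_const hp 2 rfl
    have e2 : p 2 = m+1 := seg_const hq 2 rfl
    linarith
  -- case (4,7)
  · exfalso
    have e1 : p 2 = 0 := seg_const hp 2 rfl
    have e2 : p 2 = m+1 := seg_const hq 2 rfl
    linarith
  -- case (4,8)
  · have e1 : p 0 = y2 := seg_const hq 0 rfl
    have e2 : p 0 = i := seg_const hp 0 rfl
    have e3 : p 1 = n-m := seg_const hq 1 rfl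
    have e4 : p 2 = 0 := seg_const hp 2 rfl
    exact Or.inr (Or.inr (Or.inr ⟨by linarith, pt_ext e2 e3 e4⟩))
  -- case (5,5)
  · exfalso
    have e1 : p 0 = i := seg_const hp 0 rfl
    have e2 : p 0 = m := seg_const hq 0 rfl
    exact him (by linarith)
  -- case (5,6)
  · exfalso
    have e1 : p 0 = i := seg_const hp 0 rfl
    have e2 : p 0 = m := seg_const hq 0 rfl
    exact him (by linarith)
  -- case (5,7)
  · exfalso
    have e1 : p 1 = n+1 := seg_const hp 1 rfl
    have e2 : p 1 = n-m := seg_const hq 1 rfl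
    linarith
  -- case (5,8)
  · exfalso
    have e1 : p 1 = n+1 := seg_const hp 1 rfl
    have e2 : p 1 = n-m := seg_const hq 1 rfl
    linarith
  -- case (6,6)
  · exfalso
    have e1 : p 0 = i := seg_const hp 0 rfl
    have e2 : p 0 = m := seg_const hq 0 rfl
    exact him (by linarith)
  -- case (6,7)
  · exfalso
    have e1 : p 2 = i+1 := seg_const hp 2 rfl
    have e2 : p 2 = m+1 := seg_const hq 2 rfl
    exact him (by linarith)
  -- case (6,8)
  · exfalso
    have e1 : p 2 = i+1 := seg_const hp 2 rfl
    have e2 : ((m+1:ℝ) ≤ p 2 ∧ p 2 ≤ 0) ∨ ((0:ℝ) ≤ p 2 ∧ p 2 ≤ m+1) := seg_bounds hq 2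
    have e3 : p 1 = n-m := seg_const hq 1 rfl
    have e4 : ((n+1:ℝ) ≤ p 1 ∧ p 1 ≤ n-i) ∨ ((n-i:ℝ) ≤ p 1 ∧ p 1 ≤ n+1) := seg_bounds hp 1
    rcases e2 with ⟨e2l,e2r⟩|⟨e2l,e2r⟩ <;> rcases e4 with ⟨e4l,e4r⟩|⟨e4l,e4r⟩ <;> exact him (by linarith)
  -- case (7,7)
  · exfalso
    have e1 : p 2 = i+1 := seg_const hp 2 rfl
    have e2 : p 2 = m+1 := seg_const hq 2 rfl
    exact him (by linarith)
  -- case (7,8)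
  · exfalso
    have e1 : p 1 = n-i := seg_const hp 1 rfl
    have e2 : p 1 = n-m := seg_const hq 1 rfl
    exact him (by linarith)
  -- case (8,8)
  · exfalso
    have e1 : p 1 = n-i := seg_const hp 1 rfl
    have e2 : p 1 = n-m := seg_const hq 1 rfl
    exact him (by linarith)

lemma cross (n i m x1 x2 y1 y2 : ℝ) (hi0 : 0 ≤ i) (hi1 : i + 1 ≤ n)
    (hm0 : 0 ≤ m) (hm1 : m + 1 ≤ n) (him : i ≠ m) (a b : Fin 9) {p : Pt3}
    (hp : p ∈ segment ℝ (SP n i x1 x2 a.castSucc) (SP n i x1 x2 a.succ))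
    (hq : p ∈ segment ℝ (SP n m y1 y2 b.castSucc) (SP n m y1 y2 b.succ)) :
    (x1 = m ∧ p = ![m, i-n, 0]) ∨ (x2 = m ∧ p = ![m, n-i, 0]) ∨
    (y1 = i ∧ p = ![i, m-n, 0]) ∨ (y2 = i ∧ p = ![i, n-m, 0]) := by
  rcases Nat.le_total (a : ℕ) (b : ℕ) with hab | hab
  · exact crossAux n i m x1 x2 y1 y2 hi0 hi1 hm0 hm1 him a b hab hp hq
  · have := crossAux n m i y1 y2 x1 x2 hm0 hm1 hi0 hi1 (Ne.symm him) b a hab hq hp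
    tauto

lemma not_half_nat (a b : ℕ) : (a : ℝ) ≠ (b : ℝ) + 1/2 := by
  intro hcon
  have h2 : ((2*a : ℕ) : ℝ) = ((2*b+1 : ℕ) : ℝ) := by push_cast; linarith
  have h3 : 2*a = 2*b+1 := Nat.cast_injective h2
  omega

/-- If a finite simple graph admits an orientation with all out-degrees at most 2, then
it admits a string contact representation in ℝ³ of complexity at most 14. -/
theorem outdegreeTwo_orientation_stringContactRep
    {V : Type*} [Fintype V] [DecidableEq V]
    (G : SimpleGraph V) [DecidableRel G.Adj]
    (h : ∃ f : Sym2 V → V × V,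
      (∀ e ∈ G.edgeSet, e = s((f e).1, (f e).2)) ∧
      ∀ w : V, (G.edgeFinset.filter (fun e => (f e).1 = w)).card ≤ 2) :
    ∃ Ψ : V → AAString, IsStringContactRep G Ψ ∧ ∀ v : V, (Ψ v).bends ≤ 14 := by
  classical
  obtain ⟨f, hf1, hf2⟩ := h
  set n := Fintype.card V with hn
  let e : V ≃ Fin n := Fintype.equivFin V
  let idx : V → ℝ := fun v => ((e v : ℕ) : ℝ)
  have idx_inj : ∀ {u v : V}, idx u = idx v → u = v := by
    intro u v h'
    have h'' : ((e u : ℕ) : ℝ) = ((e v : ℕ) : ℝ) := h'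
    exact e.injective (Fin.ext (Nat.cast_injective h''))
  have idx0 : ∀ v, 0 ≤ idx v := fun v => Nat.cast_nonneg _
  have idx1 : ∀ v, idx v + 1 ≤ (n : ℝ) := by
    intro v
    have hlt : (e v : ℕ) + 1 ≤ n := (e v).isLt
    show ((e v : ℕ) : ℝ) + 1 ≤ (n : ℝ)
    exact_mod_cast hlt
  -- the orientation data
  let out : V → Finset V := fun v => Finset.univ.filter (fun w => G.Adj v w ∧ (f s(v,w)).1 = v)
  have out_adj : ∀ {v w : V}, w ∈ out v → G.Adj v w := by
    intro v w hw
    have := Finset.mem_filter.mp hw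
    exact this.2.1
  have out_fst : ∀ {v w : V}, w ∈ out v → (f s(v,w)).1 = v := by
    intro v w hw
    exact (Finset.mem_filter.mp hw).2.2
  have out_card : ∀ v, (out v).card ≤ 2 := by
    intro v
    refine le_trans (Finset.card_le_card_of_injOn (fun w => s(v,w)) ?_ ?_) (hf2 v)
    · intro w hw
      have hw' := Finset.mem_filter.mp hw
      exact Finset.mem_filter.mpr
        ⟨SimpleGraph.mem_edgeFinset.mpr ((G.mem_edgeSet).mpr hw'.2.1), hw'.2.2⟩
    · intro w1 _ w2 _ hEq
      exact Sym2.congr_right.mp hEq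
  let L : V → List V := fun v => (out v).toList
  have L_len : ∀ v, (L v).length ≤ 2 := by
    intro v
    show (out v).toList.length ≤ 2
    rw [Finset.length_toList]
    exact out_card v
  let T1 : V → Option V := fun v => (L v)[0]?
  let T2 : V → Option V := fun v => (L v)[1]?
  have T_mem : ∀ {v w : V}, T1 v = some w ∨ T2 v = some w → w ∈ out v := by
    intro v w hw
    have : w ∈ L v := by
      rcases hw with hw | hw
      · exact List.mem_iff_getElem?.mpr ⟨0, hw⟩
      · exact List.mem_iff_getElem?.mpr ⟨1, hw⟩
    exact Finset.mem_toList.mp this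
  have T_surj : ∀ {v w : V}, w ∈ out v → T1 v = some w ∨ T2 v = some w := by
    intro v w hw
    obtain ⟨k, hk⟩ := List.mem_iff_getElem?.mp (Finset.mem_toList.mpr hw)
    have hlt : k < (L v).length := by
      by_contra hc
      rw [List.getElem?_eq_none (not_lt.mp hc)] at hk
      exact nomatch hk
    have hk2 : k < 2 := lt_of_lt_of_le hlt (L_len v)
    interval_cases k
    · exact Or.inl hk
    · exact Or.inr hk
  let X1 : V → ℝ := fun v => (T1 v).elim (idx v + 1/2) idx
  let X2 : V → ℝ := fun v => (T2 v).elim (idx v + 1/2) idx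
  have hX1some : ∀ {u w : V}, T1 u = some w → X1 u = idx w := by
    intro u w hT
    show (T1 u).elim (idx u + 1/2) idx = idx w
    rw [hT]
    rfl
  have hX1none : ∀ {u : V}, T1 u = none → X1 u = idx u + 1/2 := by
    intro u hT
    show (T1 u).elim (idx u + 1/2) idx = idx u + 1/2
    rw [hT]
    rfl
  have hX2some : ∀ {u w : V}, T2 u = some w → X2 u = idx w := by
    intro u w hT
    show (T2 u).elim (idx u + 1/2) idx = idx w
    rw [hT]
    rfl
  have hX2none : ∀ {u : V}, T2 u = none → X2 u = idx u + 1/2 := by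
    intro u hT
    show (T2 u).elim (idx u + 1/2) idx = idx u + 1/2
    rw [hT]
    rfl
  have X1_ne : ∀ v, X1 v ≠ idx v := by
    intro v
    cases hT : T1 v with
    | none => rw [hX1none hT]; intro hc; linarith
    | some w =>
      rw [hX1some hT]
      intro hc
      exact (out_adj (T_mem (Or.inl hT))).ne' (idx_inj hc)
  have X2_ne : ∀ v, X2 v ≠ idx v := by
    intro v
    cases hT : T2 v with
    | none => rw [hX2none hT]; intro hc; linarith
    | some w =>
      rw [hX2some hT]
      intro hc
      exact (out_adj (T_mem (Or.inr hT))).ne' (idx_inj hc)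
  have adj_of_X1 : ∀ {u w : V}, X1 u = idx w → G.Adj u w := by
    intro u w hx
    cases hT : T1 u with
    | none =>
      rw [hX1none hT] at hx
      exact absurd hx.symm (not_half_nat _ _)
    | some w' =>
      rw [hX1some hT] at hx
      have := idx_inj hx
      subst this
      exact out_adj (T_mem (Or.inl hT))
  have adj_of_X2 : ∀ {u w : V}, X2 u = idx w → G.Adj u w := by
    intro u w hx
    cases hT : T2 u with
    | none =>
      rw [hX2none hT] at hx
      exact absurd hx.symm (not_half_nat _ _)
    | some w' =>
      rw [hX2some hT] at hx
      have := idx_inj hx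
      subst this
      exact out_adj (T_mem (Or.inr hT))
  -- the strings
  let Ψ : V → AAString := fun v =>
    mkAA (n : ℝ) (idx v) (X1 v) (X2 v) (idx0 v) (idx1 v) (X1_ne v) (X2_ne v)
  have main : ∀ u v : V, u ≠ v → ∀ p, p ∈ (Ψ u).carrier → p ∈ (Ψ v).carrier →
      (X1 u = idx v ∧ p = ![idx v, idx u - n, 0]) ∨
      (X2 u = idx v ∧ p = ![idx v, (n : ℝ) - idx u, 0]) ∨
      (X1 v = idx u ∧ p = ![idx u, idx v - n, 0]) ∨
      (X2 v = idx u ∧ p = ![idx u, (n : ℝ) - idx v, 0]) := by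
    intro u v huv p hpu hpv
    obtain ⟨a, ha⟩ := Set.mem_iUnion.mp hpu
    obtain ⟨b, hb⟩ := Set.mem_iUnion.mp hpv
    exact cross (n : ℝ) (idx u) (idx v) (X1 u) (X2 u) (X1 v) (X2 v)
      (idx0 u) (idx1 u) (idx0 v) (idx1 v) (fun hh => huv (idx_inj hh)) a b ha hb
  -- contact point membership (backward direction)
  have key : ∀ u v : V, v ∈ out u → ((Ψ u).carrier ∩ (Ψ v).carrier).Nonempty := by
    intro u v hv
    have hne : (1 : ℝ) ≤ (n : ℝ) := by linarith [idx0 u, idx1 u]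
    rcases T_surj hv with hT | hT
    · have hx : X1 u = idx v := hX1some hT
      refine ⟨![idx v, idx u - (n : ℝ), 0], ?_, ?_⟩
      · apply Set.mem_iUnion.mpr
        refine ⟨⟨0, by show (0:ℕ) < 9; norm_num⟩, ?_⟩
        rw [← hx]
        exact left_mem_segment ℝ _ _
      · apply Set.mem_iUnion.mpr
        refine ⟨⟨4, by show (4:ℕ) < 9; norm_num⟩, ?_⟩
        refine mem_seg_one 1 ?_ ?_ ?_ ?_
        · intro j' hj'
          fin_cases j'
          · exact ⟨rfl, rfl⟩
          · exact absurd rfl hj'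
          · exact ⟨rfl, rfl⟩
        · show -((n:ℝ)+1) < (n:ℝ)+1
          linarith
        · show -((n:ℝ)+1) ≤ idx u - (n:ℝ)
          linarith [idx0 u]
        · show idx u - (n:ℝ) ≤ (n:ℝ)+1
          linarith [idx1 u]
    · have hx : X2 u = idx v := hX2some hT
      refine ⟨![idx v, (n : ℝ) - idx u, 0], ?_, ?_⟩
      · apply Set.mem_iUnion.mpr
        refine ⟨⟨8, by show (8:ℕ) < 9; norm_num⟩, ?_⟩
        rw [← hx]
        exact right_mem_segment ℝ _ _
      · apply Set.mem_iUnion.mpr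
        refine ⟨⟨4, by show (4:ℕ) < 9; norm_num⟩, ?_⟩
        refine mem_seg_one 1 ?_ ?_ ?_ ?_
        · intro j' hj'
          fin_cases j'
          · exact ⟨rfl, rfl⟩
          · exact absurd rfl hj'
          · exact ⟨rfl, rfl⟩
        · show -((n:ℝ)+1) < (n:ℝ)+1
          linarith
        · show -((n:ℝ)+1) ≤ (n:ℝ) - idx u
          linarith [idx1 u]
        · show (n:ℝ) - idx u ≤ (n:ℝ)+1
          linarith [idx0 u]
  refine ⟨Ψ, ⟨?_, ?_, ?_⟩, ?_⟩
  · -- contacts at endpoints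
    intro u v huv p hp
    rcases main u v huv p hp.1 hp.2 with ⟨hx, rfl⟩ | ⟨hx, rfl⟩ | ⟨hx, rfl⟩ | ⟨hx, rfl⟩
    · have h0 : (Ψ u).pts 0 = ![X1 u, idx u - (n:ℝ), 0] := rfl
      rw [hx] at h0
      exact Set.mem_union_left _ (Set.mem_insert_iff.mpr (Or.inl h0.symm))
    · have h0 : (Ψ u).pts (Fin.last (Ψ u).k) = ![X2 u, (n:ℝ) - idx u, 0] := rfl
      rw [hx] at h0
      exact Set.mem_union_left _ (Set.mem_insert_iff.mpr (Or.inr h0.symm))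
    · have h0 : (Ψ v).pts 0 = ![X1 v, idx v - (n:ℝ), 0] := rfl
      rw [hx] at h0
      exact Set.mem_union_right _ (Set.mem_insert_iff.mpr (Or.inl h0.symm))
    · have h0 : (Ψ v).pts (Fin.last (Ψ v).k) = ![X2 v, (n:ℝ) - idx v, 0] := rfl
      rw [hx] at h0
      exact Set.mem_union_right _ (Set.mem_insert_iff.mpr (Or.inr h0.symm))
  · -- no triple points
    intro u v w huv huw hvw p hp
    obtain ⟨h1, h2, h3⟩ := hp
    have C1 := main u v huv p h1 h2
    have C2 := main u w huw p h1 h3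
    rcases C1 with ⟨-, hP⟩ | ⟨-, hP⟩ | ⟨-, hP⟩ | ⟨-, hP⟩ <;>
      rcases C2 with ⟨-, hQ⟩ | ⟨-, hQ⟩ | ⟨-, hQ⟩ | ⟨-, hQ⟩
    · exact hvw (idx_inj (congrFun (hP.symm.trans hQ) 0))
    · exact hvw (idx_inj (congrFun (hP.symm.trans hQ) 0))
    · exact huv (idx_inj (congrFun (hP.symm.trans hQ) 0)).symm
    · exact huv (idx_inj (congrFun (hP.symm.trans hQ) 0)).symm
    · exact hvw (idx_inj (congrFun (hP.symm.trans hQ) 0))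
    · exact hvw (idx_inj (congrFun (hP.symm.trans hQ) 0))
    · exact huv (idx_inj (congrFun (hP.symm.trans hQ) 0)).symm
    · exact huv (idx_inj (congrFun (hP.symm.trans hQ) 0)).symm
    · exact huw (idx_inj (congrFun (hP.symm.trans hQ) 0))
    · exact huw (idx_inj (congrFun (hP.symm.trans hQ) 0))
    · have hh : idx v - (n:ℝ) = idx w - (n:ℝ) := congrFun (hP.symm.trans hQ) 1
      exact hvw (idx_inj (by linarith))
    · have hh : idx v - (n:ℝ) = (n:ℝ) - idx w := congrFun (hP.symm.trans hQ) 1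
      have := idx1 v; have := idx1 w; have := idx0 v; have := idx0 w
      linarith
    · exact huw (idx_inj (congrFun (hP.symm.trans hQ) 0))
    · exact huw (idx_inj (congrFun (hP.symm.trans hQ) 0))
    · have hh : (n:ℝ) - idx v = idx w - (n:ℝ) := congrFun (hP.symm.trans hQ) 1
      have := idx1 v; have := idx1 w; have := idx0 v; have := idx0 w
      linarith
    · have hh : (n:ℝ) - idx v = (n:ℝ) - idx w := congrFun (hP.symm.trans hQ) 1
      exact hvw (idx_inj (by linarith))
  · -- intersect iff adjacent
    intro u v huv
    constructor
    · rintro ⟨p, hp⟩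
      rcases main u v huv p hp.1 hp.2 with ⟨hx, -⟩ | ⟨hx, -⟩ | ⟨hx, -⟩ | ⟨hx, -⟩
      · exact adj_of_X1 hx
      · exact adj_of_X2 hx
      · exact (adj_of_X1 hx).symm
      · exact (adj_of_X2 hx).symm
    · intro hadj
      have hor : (f s(u,v)).1 = u ∨ (f s(u,v)).1 = v := by
        have hedge : s(u,v) ∈ G.edgeSet := (G.mem_edgeSet).mpr hadj
        have heq := hf1 s(u,v) hedge
        rcases Sym2.eq_iff.mp heq with ⟨h1, h2⟩ | ⟨h1, h2⟩
        · exact Or.inl h1.symm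
        · exact Or.inr h2.symm
      rcases hor with hor | hor
      · have hv : v ∈ out u := Finset.mem_filter.mpr ⟨Finset.mem_univ _, hadj, hor⟩
        exact key u v hv
      · have hu : u ∈ out v := by
          refine Finset.mem_filter.mpr ⟨Finset.mem_univ _, hadj.symm, ?_⟩
          rw [Sym2.eq_swap]
          exact hor
        obtain ⟨p, h1, h2⟩ := key v u hu
        exact ⟨p, h2, h1⟩
  · -- bends
    intro v
    show (9 : ℕ) - 1 ≤ 14
    norm_num
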